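/- arXiv:0902.2472 — 3 statements merged into one kernel-verified Lean document; each statement's English description precedes it below -/
import Mathlib

section
/- Convex Lipschitz functions on $\mathbb{R}^d$ form a convergence-determining class for probability measures on $\mathbb{R}^d$ with respect to which such functions are integrable: if $(\mu_n)$ and $\mu$ are probability measures on $\mathbb{R}^d$ such that every convex Lipschitz function $h : \mathbb{R}^d \to \mathbb{R}$ is integrable with respect to each $\mu_n$ and with respect to $\mu$, and $\int h\, d\mu_n \to \int h\, d\mu$ for every convex Lipschitz $h$, then $\mu_n$ converges weakly to $\mu$. -/
set_option linter.unusedSectionVars false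
open MeasureTheory Filter Metric

section aux
variable {E : Type*} [NormedAddCommGroup E] [NormedSpace ℝ E]

/-- convex and Lipschitz -/
def IsCL (f : E → ℝ) : Prop :=
  ConvexOn ℝ Set.univ f ∧ ∃ L : NNReal, LipschitzWith L f

lemma IsCL.add {f g : E → ℝ} (hf : IsCL f) (hg : IsCL g) : IsCL (fun x => f x + g x) := by
  obtain ⟨hfc, Lf, hfl⟩ := hf
  obtain ⟨hgc, Lg, hgl⟩ := hg
  exact ⟨hfc.add hgc, Lf + Lg, hfl.add hgl⟩

lemma IsCL.sup {f g : E → ℝ} (hf : IsCL f) (hg : IsCL g) :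
    IsCL (fun x => max (f x) (g x)) := by
  obtain ⟨hfc, Lf, hfl⟩ := hf
  obtain ⟨hgc, Lg, hgl⟩ := hg
  exact ⟨hfc.sup hgc, Lf ⊔ Lg, hfl.max hgl⟩

/-- difference of convex Lipschitz -/
def IsDC (f : E → ℝ) : Prop :=
  ∃ g h : E → ℝ, IsCL g ∧ IsCL h ∧ ∀ x, f x = g x - h x

lemma IsDC.sup {f g : E → ℝ} (hf : IsDC f) (hg : IsDC g) :
    IsDC (fun x => max (f x) (g x)) := by
  obtain ⟨a, b, ha, hb, hab⟩ := hf
  obtain ⟨c, d, hc, hd, hcd⟩ := hg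
  refine ⟨fun x => max (a x + d x) (c x + b x), fun x => b x + d x,
    (ha.add hd).sup (hc.add hb), hb.add hd, fun x => ?_⟩
  simp only [hab, hcd, ← max_sub_sub_right]
  congr 1 <;> ring

/-- the basic cone function -/
noncomputable def cone (z : E) (c : ℝ) : E → ℝ := fun x => max (‖x - z‖ - c) 0

lemma lipschitzWith_one_norm_sub (z : E) : LipschitzWith 1 (fun x : E => ‖x - z‖) := by
  apply LipschitzWith.of_dist_le_mul
  intro x y
  rw [Real.dist_eq, NNReal.coe_one, one_mul, dist_eq_norm]
  calc |‖x - z‖ - ‖y - z‖| ≤ ‖(x - z) - (y - z)‖ := abs_norm_sub_norm_le _ _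
  _ = ‖x - y‖ := by rw [sub_sub_sub_cancel_right]

lemma convexOn_norm_sub (z : E) : ConvexOn ℝ Set.univ (fun x : E => ‖x - z‖) := by
  simpa [dist_eq_norm] using convexOn_dist z (convex_univ (𝕜 := ℝ) (E := E))

lemma isCL_cone (z : E) (c : ℝ) : IsCL (cone z c) := by
  constructor
  · have h1 : ConvexOn ℝ Set.univ (fun x : E => ‖x - z‖ - c) := by
      exact (convexOn_norm_sub z).add_const (-c)
    exact h1.sup (convexOn_const 0 convex_univ)
  · refine ⟨1, LipschitzWith.of_dist_le_mul fun x y => ?_⟩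
    rw [Real.dist_eq, NNReal.coe_one, one_mul]
    calc |max (‖x - z‖ - c) 0 - max (‖y - z‖ - c) 0|
        ≤ |(‖x - z‖ - c) - (‖y - z‖ - c)| := abs_max_sub_max_le_abs _ _ _
      _ = |‖x - z‖ - ‖y - z‖| := by ring_nf
      _ ≤ dist x y := by
          rw [dist_eq_norm]
          calc |‖x - z‖ - ‖y - z‖| ≤ ‖(x - z) - (y - z)‖ := abs_norm_sub_norm_le _ _
          _ = ‖x - y‖ := by rw [sub_sub_sub_cancel_right]

lemma IsCL.const_add_smul {f : E → ℝ} (hf : IsCL f) (b : ℝ) {c : ℝ} (hc : 0 ≤ c) :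
    IsCL (fun x => b + c * f x) := by
  obtain ⟨hfc, L, hfl⟩ := hf
  constructor
  · have : ConvexOn ℝ Set.univ (fun x => c • f x) := hfc.smul hc
    have h2 := this.add_const b
    refine ConvexOn.congr h2 ?_
    intro x _; simp [add_comm, smul_eq_mul]
  · refine ⟨c.toNNReal * L, LipschitzWith.of_dist_le_mul fun x y => ?_⟩
    rw [Real.dist_eq]
    have : b + c * f x - (b + c * f y) = c * (f x - f y) := by ring
    rw [this, abs_mul, abs_of_nonneg hc]
    push_cast [Real.coe_toNNReal c hc]
    rw [mul_assoc]
    exact mul_le_mul_of_nonneg_left (by simpa [Real.dist_eq] using hfl.dist_le_mul x y) hc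

/-- trapezoid bump: 1 on ball z r, 0 outside ball z (2r) -/
noncomputable def bump (z : E) (r : ℝ) : E → ℝ :=
  fun x => (1 + (1/r) * cone z (2*r) x) - (1/r) * cone z r x

lemma isDC_bump (z : E) (r : ℝ) (hr : 0 < r) : IsDC (bump z r) := by
  have h1 : IsCL (fun x => 1 + (1/r) * cone z (2*r) x) :=
    (isCL_cone z (2*r)).const_add_smul 1 (by positivity)
  have h2 : IsCL (fun x => 0 + (1/r) * cone z r x) :=
    (isCL_cone z r).const_add_smul 0 (by positivity)
  simp only [zero_add] at h2
  exact ⟨_, _, h1, h2, fun x => rfl⟩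
end aux

section bumpvals
variable {E : Type*} [NormedAddCommGroup E] [NormedSpace ℝ E]

lemma cone_mono {z : E} {c c' : ℝ} (h : c ≤ c') (x : E) : cone z c' x ≤ cone z c x :=
  max_le_max (by simp [cone]; linarith) le_rfl

lemma bump_le_one {z : E} {r : ℝ} (hr : 0 < r) (x : E) : bump z r x ≤ 1 := by
  have h1 : cone z (2*r) x ≤ cone z r x := cone_mono (by linarith) x
  have h2 : (1/r) * cone z (2*r) x ≤ (1/r) * cone z r x :=
    mul_le_mul_of_nonneg_left h1 (by positivity)
  simp only [bump]; linarith

lemma bump_nonneg {z : E} {r : ℝ} (hr : 0 < r) (x : E) : 0 ≤ bump z r x := by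
  have h1 : cone z r x ≤ cone z (2*r) x + r := by
    rw [cone, cone, ← max_add_add_right]
    exact max_le_max (by linarith) (by linarith)
  have h2 : (1/r) * cone z r x ≤ (1/r) * (cone z (2*r) x + r) :=
    mul_le_mul_of_nonneg_left h1 (by positivity)
  have h3 : (1/r) * r = 1 := one_div_mul_cancel hr.ne'
  simp only [bump]; nlinarith

lemma bump_eq_one {z : E} {r : ℝ} (hr : 0 < r) {x : E} (hx : ‖x - z‖ < r) :
    bump z r x = 1 := by
  have h1 : cone z (2*r) x = 0 := max_eq_right (by linarith)
  have h2 : cone z r x = 0 := max_eq_right (by linarith)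
  simp [bump, h1, h2]

lemma bump_eq_zero {z : E} {r : ℝ} (hr : 0 < r) {x : E} (hx : 2*r ≤ ‖x - z‖) :
    bump z r x = 0 := by
  have h1 : cone z (2*r) x = ‖x - z‖ - 2*r := max_eq_left (by linarith)
  have h2 : cone z r x = ‖x - z‖ - r := max_eq_left (by linarith)
  simp only [bump, h1, h2]
  field_simp
  ring

end bumpvals

open scoped BoundedContinuousFunction


set_option maxHeartbeats 1000000 in
theorem aux_weak_convergence {Ω : Type*} [NormedAddCommGroup Ω] [NormedSpace ℝ Ω]
    [MeasurableSpace Ω] [BorelSpace Ω]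
    (μs : ℕ → Measure Ω) (μ : Measure Ω) [∀ n, IsProbabilityMeasure (μs n)]
    [IsProbabilityMeasure μ] [μ.InnerRegularCompactLTTop]
    (hDC : ∀ f : Ω → ℝ, IsDC f → (∀ n, Integrable f (μs n)) ∧ Integrable f μ ∧
      Tendsto (fun n => ∫ x, f x ∂(μs n)) atTop (nhds (∫ x, f x ∂μ))) :
    ∀ f : Ω →ᵇ ℝ,
      Tendsto (fun n => ∫ x, f x ∂(μs n)) atTop (nhds (∫ x, f x ∂μ)) := by
  -- main inequality for compacts
  have hcompact : ∀ K G : Set Ω, IsCompact K → IsOpen G → K ⊆ G →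
      (μ K).toReal ≤ atTop.liminf (fun n => ((μs n) G).toReal) := by
    intro K G hK hG hKG
    have hbdd : ∀ n, ((μs n) G).toReal ≤ 1 := fun n => by
      have := prob_le_one (μ := μs n) (s := G)
      simpa using ENNReal.toReal_mono (by simp) this
    have hBdd : atTop.IsBoundedUnder (· ≤ ·) (fun n => ((μs n) G).toReal) :=
      isBoundedUnder_of ⟨1, hbdd⟩
    rcases K.eq_empty_or_nonempty with hKe | hKne
    · rw [hKe]
      simp only [measure_empty, ENNReal.toReal_zero]
      exact le_liminf_of_le hBdd.isCoboundedUnder_ge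
        (Eventually.of_forall fun n => ENNReal.toReal_nonneg)
    -- build the cover
    have hrad : ∀ x : K, ∃ r : ℝ, 0 < r ∧ Metric.ball (x : Ω) (2*r) ⊆ G := by
      rintro ⟨x, hx⟩
      rcases Metric.isOpen_iff.mp hG x (hKG hx) with ⟨ε, hε, hball⟩
      exact ⟨ε/2, by linarith, by rw [show 2*(ε/2) = ε by ring]; exact hball⟩
    choose rad hrad0 hradG using hrad
    obtain ⟨t, ht⟩ := hK.elim_finite_subcover (fun x : K => Metric.ball (x : Ω) (rad x))
      (fun _ => Metric.isOpen_ball)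
      (fun y hy => Set.mem_iUnion.mpr ⟨⟨y, hy⟩, Metric.mem_ball_self (hrad0 _)⟩)
    have htne : t.Nonempty := by
      obtain ⟨y, hy⟩ := hKne
      obtain ⟨i, hi, -⟩ := Set.mem_iUnion₂.mp (ht hy)
      exact ⟨i, hi⟩
    set F : Ω → ℝ := t.sup' htne (fun i => bump (i : Ω) (rad i)) with hF
    have hFapp : ∀ x, F x = t.sup' htne (fun i => bump (i : Ω) (rad i) x) := by
      intro x; rw [hF, Finset.sup'_apply]
    have hFdc : IsDC F := by
      apply Finset.sup'_induction (p := IsDC)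
      · intro f hf g hg
        have : (f ⊔ g) = fun x => max (f x) (g x) := rfl
        rw [this]; exact hf.sup hg
      · intro i _; exact isDC_bump (i : Ω) (rad i) (hrad0 i)
    have hF0 : ∀ x, 0 ≤ F x := by
      intro x
      obtain ⟨i, hi⟩ := id htne
      rw [hFapp]
      have h1 : (fun j : K => bump (↑j) (rad j) x) i ≤
          t.sup' htne (fun j => bump (↑j) (rad j) x) :=
        Finset.le_sup' (fun j => bump (↑j) (rad j) x) hi
      have h2 : 0 ≤ bump (↑i : Ω) (rad i) x := bump_nonneg (hrad0 i) x
      exact le_trans h2 h1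
    have hF1 : ∀ x, F x ≤ 1 := by
      intro x
      rw [hFapp]
      exact Finset.sup'_le _ _ fun i _ => bump_le_one (hrad0 i) x
    have hFK : ∀ x ∈ K, 1 ≤ F x := by
      intro x hx
      obtain ⟨i, hit, hball⟩ := Set.mem_iUnion₂.mp (ht hx)
      rw [hFapp]
      have h1 : (fun j : K => bump (↑j) (rad j) x) i ≤
          t.sup' htne (fun j => bump (↑j) (rad j) x) :=
        Finset.le_sup' (fun j => bump (↑j) (rad j) x) hit
      have h2 : bump (↑i : Ω) (rad i) x = 1 :=
        bump_eq_one (hrad0 i) (by rw [← dist_eq_norm]; exact hball)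
      simp only [h2] at h1
      exact h1
    have hFG : ∀ x, x ∉ G → F x ≤ 0 := by
      intro x hxG
      rw [hFapp]
      refine Finset.sup'_le _ _ fun i hit => ?_
      have hxb : x ∉ Metric.ball (i : Ω) (2 * rad i) := fun hx => hxG (hradG i hx)
      have hd : 2 * rad i ≤ ‖x - (i : Ω)‖ := by
        rw [← dist_eq_norm]
        exact not_lt.mp (by simpa [Metric.mem_ball] using hxb)
      rw [bump_eq_zero (hrad0 i) hd]
    obtain ⟨iF, iFμ, tF⟩ := hDC F hFdc
    -- μ K ≤ ∫ F dμ
    have step1 : (μ K).toReal ≤ ∫ x, F x ∂μ := by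
      have e1 : (μ K).toReal = ∫ _ in K, (1:ℝ) ∂μ := by rw [setIntegral_const]; simp [Measure.real]
      rw [e1]
      calc ∫ _ in K, (1:ℝ) ∂μ ≤ ∫ x in K, F x ∂μ :=
            setIntegral_mono_on (integrable_const 1).integrableOn iFμ.integrableOn
              hK.measurableSet (fun x hx => hFK x hx)
        _ ≤ ∫ x, F x ∂μ := setIntegral_le_integral iFμ (Eventually.of_forall hF0)
    -- ∫ F dμn ≤ μn G
    have step2 : ∀ n, ∫ x, F x ∂(μs n) ≤ ((μs n) G).toReal := by
      intro n
      have hle : ∀ x, F x ≤ Set.indicator G (fun _ => (1:ℝ)) x := by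
        intro x
        by_cases hx : x ∈ G
        · simp [Set.indicator_of_mem hx, hF1 x]
        · simp [Set.indicator_of_notMem hx, hFG x hx]
      calc ∫ x, F x ∂(μs n) ≤ ∫ x, Set.indicator G (fun _ => (1:ℝ)) x ∂(μs n) :=
            integral_mono (iF n) ((integrable_const 1).indicator hG.measurableSet) hle
        _ = ((μs n) G).toReal := by
            rw [integral_indicator_const _ hG.measurableSet]; simp [Measure.real]
    have step3 : ∫ x, F x ∂μ ≤ atTop.liminf (fun n => ((μs n) G).toReal) := by
      rw [← tF.liminf_eq]
      exact liminf_le_liminf (Eventually.of_forall step2)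
        tF.isBoundedUnder_ge hBdd.isCoboundedUnder_ge
    exact step1.trans step3
  -- main inequality for open sets, real version
  have hopen : ∀ G : Set Ω, IsOpen G →
      (μ G).toReal ≤ atTop.liminf (fun n => ((μs n) G).toReal) := by
    intro G hG
    by_contra hc
    push_neg at hc
    set L := atTop.liminf (fun n => ((μs n) G).toReal)
    obtain ⟨K, hKG, hK, hlt⟩ := hG.measurableSet.exists_isCompact_lt_add
      (measure_ne_top μ G) (ε := ENNReal.ofReal ((μ G).toReal - L))
      (by simp [ENNReal.ofReal_eq_zero]; linarith)
    have h2 : (μ G).toReal < (μ K).toReal + ((μ G).toReal - L) := by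
      have := ENNReal.toReal_mono ?_ hlt.le
      · rw [ENNReal.toReal_add (measure_ne_top μ K) ENNReal.ofReal_ne_top,
          ENNReal.toReal_ofReal (by linarith)] at this
        rcases lt_or_eq_of_le this with h' | h'
        · exact h'
        · -- strict from hlt
          have := (ENNReal.toReal_lt_toReal (measure_ne_top μ G) (by
            exact ENNReal.add_ne_top.mpr ⟨measure_ne_top μ K, ENNReal.ofReal_ne_top⟩)).mpr hlt
          rwa [ENNReal.toReal_add (measure_ne_top μ K) ENNReal.ofReal_ne_top,
            ENNReal.toReal_ofReal (by linarith)] at this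
      · exact ENNReal.add_ne_top.mpr ⟨measure_ne_top μ K, ENNReal.ofReal_ne_top⟩
    have h3 := hcompact K G hK hG hKG
    linarith
  -- pass to probability measures and the portmanteau theorem
  set P : ProbabilityMeasure Ω := ⟨μ, inferInstance⟩ with hP
  set Ps : ℕ → ProbabilityMeasure Ω := fun n => ⟨μs n, inferInstance⟩ with hPs
  have key : Tendsto Ps atTop (nhds P) := by
    apply tendsto_of_forall_isOpen_le_liminf
    intro G hG
    have hbdd : atTop.IsBoundedUnder (· ≤ ·) (fun n => Ps n G) :=
      isBoundedUnder_of ⟨1, fun n => ProbabilityMeasure.apply_le_one _ _⟩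
    have hbdd' : atTop.IsBoundedUnder (· ≥ ·) (fun n => Ps n G) :=
      ⟨0, Eventually.of_forall fun n => zero_le⟩
    rw [← NNReal.coe_le_coe]
    have hmap : ((atTop.liminf (fun n => Ps n G) : NNReal) : ℝ) =
        atTop.liminf (fun n => ((Ps n G : NNReal) : ℝ)) := by
      exact Monotone.map_liminf_of_continuousAt (f := fun x : NNReal => (x : ℝ))
        (fun a b hab => NNReal.coe_le_coe.mpr hab) _
        NNReal.continuous_coe.continuousAt hbdd.isCoboundedUnder_ge hbdd'
    rw [hmap]
    simp only [hPs, hP, ProbabilityMeasure.mk_apply, ENNReal.coe_toNNReal_eq_toReal]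
    exact hopen G hG
  exact fun f => ProbabilityMeasure.tendsto_iff_forall_integral_tendsto.mp key f


theorem convex_lipschitz_convergence_determining
    (d : ℕ) (μs : ℕ → Measure (EuclideanSpace ℝ (Fin d)))
    (μ : Measure (EuclideanSpace ℝ (Fin d)))
    [∀ n, IsProbabilityMeasure (μs n)] [IsProbabilityMeasure μ]
    (h : ∀ h : EuclideanSpace ℝ (Fin d) → ℝ,
      ConvexOn ℝ Set.univ h → (∃ L : NNReal, LipschitzWith L h) →
        (∀ n, Integrable h (μs n)) ∧ Integrable h μ ∧
          Tendsto (fun n => ∫ x, h x ∂(μs n)) atTop (nhds (∫ x, h x ∂μ))) :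
    ∀ f : EuclideanSpace ℝ (Fin d) →ᵇ ℝ,
      Tendsto (fun n => ∫ x, f x ∂(μs n)) atTop (nhds (∫ x, f x ∂μ)) := by
  apply aux_weak_convergence
  rintro f ⟨a, b, ⟨hac, hal⟩, ⟨hbc, hbl⟩, hab⟩
  obtain ⟨ia, iaμ, ta⟩ := h a hac hal
  obtain ⟨ib, ibμ, tb⟩ := h b hbc hbl
  have hfe : f = fun x => a x - b x := funext hab
  refine ⟨fun n => ?_, ?_, ?_⟩
  · rw [hfe]; exact (ia n).sub (ib n)
  · rw [hfe]; exact iaμ.sub ibμ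
  · have key : ∀ (ν : Measure (EuclideanSpace ℝ (Fin d))) (hia : Integrable a ν)
        (hib : Integrable b ν), ∫ x, f x ∂ν = (∫ x, a x ∂ν) - ∫ x, b x ∂ν := by
      intro ν hia hib
      rw [hfe, integral_sub hia hib]
    simp only [key μ iaμ ibμ, fun n => key (μs n) (ia n) (ib n)]
    exact ta.sub tb
end

section
/- Let $X_0, \dots, X_{n-1}$ be independent random variables with $\mathbb{P}[X_j = -1] = \mathbb{P}[X_j = 1] = 1/2$, and let $\mathcal{C}_n$ be the circulant matrix with first row $X_0, \dots, X_{n-1}$. If $n \ge 3$ is odd, then $\mathbb{P}[\mathcal{C}_n \text{ is singular}] \le \min\left\{ c_3\,\frac{d(n)}{n},\ \sum_{\substack{1 < m \le n \\ m \mid n}} 2^{-\varphi(m)} \right\}$, where $c_3 > 0$ is an absolute constant, $d(n)$ is the number of positive divisors of $n$, and $\varphi$ is Euler's totient function. -/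
open MeasureTheory ProbabilityTheory
open scoped ENNReal

open Finset Polynomial
open scoped Classical

noncomputable section CirculantAux


lemma cb_sq_mul (k : ℕ) : Nat.centralBinom k ^ 2 * (3*k+1) ≤ 16 ^ k := by
  induction k with
  | zero => simp [Nat.centralBinom]
  | succ k ih =>
    have h := Nat.succ_mul_centralBinom_succ k
    have hpos : 0 < (k+1)^2 * (3*k+1) := by positivity
    have key : ((k+1)^2 * (3*k+1)) * (Nat.centralBinom (k+1) ^ 2 * (3*(k+1)+1))
        ≤ ((k+1)^2 * (3*k+1)) * 16 ^ (k+1) := by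
      have e1 : ((k+1)^2 * (3*k+1)) * (Nat.centralBinom (k+1) ^ 2 * (3*(k+1)+1))
          = ((k+1) * Nat.centralBinom (k+1))^2 * ((3*k+1) * (3*k+4)) := by ring
      rw [e1, h]
      have e2 : (2 * (2*k+1) * Nat.centralBinom k)^2 * ((3*k+1)*(3*k+4))
          = (Nat.centralBinom k ^ 2 * (3*k+1)) * (4 * (2*k+1)^2 * (3*k+4)) := by ring
      rw [e2]
      calc (Nat.centralBinom k ^ 2 * (3*k+1)) * (4 * (2*k+1)^2 * (3*k+4))
          ≤ 16 ^ k * (4 * (2*k+1)^2 * (3*k+4)) := Nat.mul_le_mul_right _ ih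
        _ ≤ 16 ^ k * (16 * ((k+1)^2 * (3*k+1))) := by
            apply Nat.mul_le_mul_left
            nlinarith
        _ = ((k+1)^2 * (3*k+1)) * 16 ^ (k+1) := by ring
    exact Nat.le_of_mul_le_mul_left key hpos

lemma choose_half_sq (N : ℕ) : (N.choose (N/2))^2 * N ≤ 4 ^ N := by
  rcases Nat.even_or_odd N with ⟨k, hk⟩ | ⟨k, hk⟩
  · subst hk
    have h2 : (k+k)/2 = k := by omega
    rw [h2]
    have h3 : (k+k).choose k = Nat.centralBinom k := by rw [Nat.centralBinom]; ring_nf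
    rw [h3]
    calc Nat.centralBinom k ^2 * (k+k) ≤ Nat.centralBinom k^2 * (3*k+1) := by
          apply Nat.mul_le_mul_left; omega
      _ ≤ 16^k := cb_sq_mul k
      _ = 4^(k+k) := by rw [show (16:ℕ) = 4^2 by norm_num, ← pow_mul]; congr 1; ring
  · subst hk
    have h2 : (2*k+1)/2 = k := by omega
    rw [h2]
    have hle : (2*k+1).choose k ≤ 2 * Nat.centralBinom k := by
      rcases Nat.eq_zero_or_pos k with rfl | hk0
      · simp [Nat.centralBinom]
      · obtain ⟨j, rfl⟩ : ∃ j, k = j + 1 := ⟨k-1, by omega⟩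
        have e : 2*(j+1)+1 = (2*(j+1)) + 1 := by ring
        rw [e, Nat.choose_succ_succ]
        simp only [Nat.succ_eq_add_one]
        have c1 : (2*(j+1)).choose j ≤ Nat.centralBinom (j+1) := by
          have := Nat.choose_le_middle j (2*(j+1))
          simpa [Nat.centralBinom, show 2*(j+1)/2 = j+1 by omega] using this
        have c2 : (2*(j+1)).choose (j+1) ≤ Nat.centralBinom (j+1) := le_of_eq rfl
        omega
    calc (2*k+1).choose k ^2 * (2*k+1) ≤ (2*Nat.centralBinom k)^2 * (2*k+1) := by
          apply Nat.mul_le_mul_right; exact Nat.pow_le_pow_left hle 2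
      _ = 4 * (Nat.centralBinom k^2 * (2*k+1)) := by ring
      _ ≤ 4 * (Nat.centralBinom k^2 * (3*k+1)) := by
          apply Nat.mul_le_mul_left; apply Nat.mul_le_mul_left; omega
      _ ≤ 4 * 16^k := Nat.mul_le_mul_left _ (cb_sq_mul k)
      _ = 4^(2*k+1) := by
          rw [show (16:ℕ) = 4^2 by norm_num, ← pow_mul, pow_succ]; ring

lemma le_two_pow_totient {m : ℕ} (hm : Odd m) : m ≤ 2 ^ m.totient := by
  by_contra h
  push_neg at h
  have hone : 1 ≤ 2 ^ m.totient := Nat.one_le_two_pow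
  have hm2 : 2 ≤ m := by omega
  have hcop : Nat.Coprime 2 m := by
    rw [Nat.Prime.coprime_iff_not_dvd Nat.prime_two]
    rintro ⟨c, rfl⟩
    rcases hm with ⟨t, ht⟩; omega
  have hmod := Nat.ModEq.pow_totient hcop
  have h1 : 2 ^ m.totient % m = 2 ^ m.totient := Nat.mod_eq_of_lt h
  have h2 : 1 % m = 1 := Nat.mod_eq_of_lt (by omega)
  have : 2 ^ m.totient = 1 := by
    have := hmod; unfold Nat.ModEq at this; omega
  have hpos := Nat.totient_pos.mpr (show 0 < m by omega)
  have : (2:ℕ) ^ m.totient ≥ 2 := by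
    calc (2:ℕ)^m.totient ≥ 2^1 := Nat.pow_le_pow_right (by norm_num) hpos
    _ = 2 := by norm_num
  omega

lemma two_le_totient {m : ℕ} (hm : 3 ≤ m) : 2 ≤ m.totient := by
  have he : Even m.totient := Nat.totient_even (by omega)
  have hp : 0 < m.totient := Nat.totient_pos.mpr (by omega)
  rcases he with ⟨r, hr⟩
  omega


def sgn (b : Bool) : ℚ := if b then 1 else -1

def sig {N : ℕ} (s : Fin N → Bool) : ℚ := ∑ i, sgn (s i)

noncomputable def Qpoly {n : ℕ} (b : Fin n → Bool) : ℚ[X] :=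
  ∑ j : Fin n, C (sgn (b j)) * X ^ (j : ℕ)

noncomputable def Bset (n m : ℕ) : Finset (Fin n → Bool) :=
  univ.filter (fun b => cyclotomic m ℚ ∣ Qpoly b)

lemma sig_eq {N : ℕ} (s : Fin N → Bool) :
    sig s = 2 * ((univ.filter (fun i => s i = true)).card : ℚ) - N := by
  have h : ∀ i : Fin N, sgn (s i) = 2 * (if s i = true then (1:ℚ) else 0) - 1 := by
    intro i; cases h : s i <;> simp [sgn] <;> norm_num
  rw [sig, Finset.sum_congr rfl (fun i _ => h i)]
  rw [Finset.sum_sub_distrib, ← Finset.mul_sum, Finset.sum_boole]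
  simp

lemma cnt_le (N : ℕ) (v : ℚ) :
    (univ.filter (fun s : Fin N → Bool => sig s = v)).card ≤ N.choose (N/2) := by
  classical
  rcases (univ.filter (fun s : Fin N → Bool => sig s = v)).eq_empty_or_nonempty with he | ⟨s₀, hs₀⟩
  · rw [he]; simp
  · set T₀ := (univ.filter (fun i => s₀ i = true)).card with hT₀
    have hsub : (univ.filter (fun s : Fin N → Bool => sig s = v)) ⊆
        (univ.filter (fun s : Fin N → Bool => (univ.filter (fun i => s i = true)).card = T₀)) := by
      intro s hs
      simp only [mem_filter, mem_univ, true_and] at hs ⊢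
      have h1 := sig_eq s
      have h2 := sig_eq s₀
      have hv : sig s₀ = v := (mem_filter.mp hs₀).2
      have : ((univ.filter (fun i => s i = true)).card : ℚ) = T₀ := by
        rw [hs] at h1; rw [hv] at h2; rw [hT₀]; linarith [h1, h2]
      exact_mod_cast this
    refine le_trans (Finset.card_le_card hsub) ?_
    have hcard : (univ.filter (fun s : Fin N → Bool =>
        (univ.filter (fun i => s i = true)).card = T₀)).card ≤ N.choose T₀ := by
      have := Finset.card_le_card_of_injOn
        (s := univ.filter (fun s : Fin N → Bool =>
          (univ.filter (fun i => s i = true)).card = T₀))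
        (f := fun s : Fin N → Bool => univ.filter (fun i => s i = true))
        (t := Finset.powersetCard T₀ (univ : Finset (Fin N))) ?_ ?_
      · refine le_trans this ?_
        rw [Finset.card_powersetCard]
        simp
      · intro s hs
        simp only [mem_coe, mem_filter, mem_univ, true_and] at hs ⊢
        rw [Finset.mem_powersetCard]
        exact ⟨Finset.filter_subset _ _ |>.trans (by simp), hs⟩
      · intro s hs t ht hst
        funext i
        have : (i ∈ univ.filter (fun i => s i = true)) ↔ (i ∈ univ.filter (fun i => t i = true)) := by
          simp only at hst; rw [hst]
        simp only [mem_filter, mem_univ, true_and] at this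
        cases hsi : s i <;> cases hti : t i <;> simp [hsi, hti] at this ⊢ <;> tauto
    exact le_trans hcard (Nat.choose_le_middle _ _)


noncomputable def Rpoly {m N : ℕ} (g : Fin m → Fin N → Bool) : ℚ[X] :=
  ∑ t : Fin m, C (sig (g t)) * X ^ (t : ℕ)

lemma Rpoly_coeff {m : ℕ} (f : Fin m → ℚ) (t₀ : Fin m) :
    (∑ t : Fin m, C (f t) * X ^ (t : ℕ)).coeff (t₀ : ℕ) = f t₀ := by
  rw [finset_sum_coeff]
  rw [Finset.sum_eq_single t₀]
  · simp [coeff_C_mul_X_pow]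
  · intro t _ ht
    rw [coeff_C_mul_X_pow]
    simp only [ite_eq_right_iff]
    intro h
    exact absurd (Fin.val_injective h.symm) ht
  · simp

lemma sig_eq_of_tail_eq {m N : ℕ} (hm : 0 < m) {g g' : Fin m → Fin N → Bool}
    (hg : cyclotomic m ℚ ∣ Rpoly g) (hg' : cyclotomic m ℚ ∣ Rpoly g')
    (h : ∀ t : Fin m, m.totient ≤ (t : ℕ) → g t = g' t) :
    ∀ t, sig (g t) = sig (g' t) := by
  have hφpos : 0 < m.totient := Nat.totient_pos.mpr hm
  have hdiff : Rpoly g - Rpoly g'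
      = ∑ t : Fin m, C (sig (g t) - sig (g' t)) * X ^ (t : ℕ) := by
    rw [Rpoly, Rpoly, ← Finset.sum_sub_distrib]
    refine Finset.sum_congr rfl fun t _ => ?_
    rw [map_sub, sub_mul]
  have hD : cyclotomic m ℚ ∣ (Rpoly g - Rpoly g') := dvd_sub hg hg'
  have hdeg : (Rpoly g - Rpoly g').degree < (cyclotomic m ℚ).degree := by
    rw [degree_cyclotomic, hdiff]
    refine lt_of_le_of_lt (degree_sum_le _ _) ?_
    rw [Finset.sup_lt_iff (by exact_mod_cast WithBot.bot_lt_coe _)]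
    intro t _
    by_cases ht : (t : ℕ) < m.totient
    · exact lt_of_le_of_lt (degree_C_mul_X_pow_le _ _) (by exact_mod_cast ht)
    · rw [h t (by omega), sub_self, map_zero, zero_mul, degree_zero]
      exact_mod_cast WithBot.bot_lt_coe _
  have hz := Polynomial.eq_zero_of_dvd_of_degree_lt hD hdeg
  intro t₀
  have h2 : (∑ t : Fin m, C (sig (g t) - sig (g' t)) * X ^ (t : ℕ)).coeff (t₀ : ℕ) = 0 := by
    rw [← hdiff, hz, coeff_zero]
  rw [Rpoly_coeff (fun t => sig (g t) - sig (g' t)) t₀] at h2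
  linarith

lemma card_filter_val_lt (m φ : ℕ) (hφm : φ ≤ m) :
    ((univ : Finset (Fin m)).filter (fun t : Fin m => t.val < φ)).card = φ := by
  rcases eq_or_lt_of_le hφm with rfl | hlt
  · have h : (univ : Finset (Fin φ)).filter (fun t : Fin φ => t.val < φ) = univ := by
      ext t; simp [t.isLt]
    rw [h, Finset.card_univ, Fintype.card_fin]
  · have h : (univ : Finset (Fin m)).filter (fun t : Fin m => t.val < φ)
        = Finset.Iio (⟨φ, hlt⟩ : Fin m) := by
      ext t
      simp [Finset.mem_Iio, Fin.lt_def]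
    rw [h, Fin.card_Iio]

lemma Scount (m N : ℕ) (hm : 0 < m) :
    ((univ : Finset (Fin m → Fin N → Bool)).filter
      (fun g => cyclotomic m ℚ ∣ Rpoly g)).card
      ≤ 2 ^ ((m - m.totient) * N) * (N.choose (N / 2)) ^ m.totient := by
  classical
  set φ := m.totient with hφdef
  have hφm : φ ≤ m := Nat.totient_le m
  set S := (univ : Finset (Fin m → Fin N → Bool)).filter
      (fun g => cyclotomic m ℚ ∣ Rpoly g) with hS
  set τmap : (Fin m → Fin N → Bool) → (Fin m → Fin N → Bool) :=
    fun g t => if φ ≤ (t : ℕ) then g t else (fun _ => false) with hτ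
  rw [Finset.card_eq_sum_card_fiberwise
    (f := τmap) (t := S.image τmap) (fun g hg => Finset.mem_image_of_mem _ hg)]
  have hfiber : ∀ τ ∈ S.image τmap,
      (S.filter (fun g => τmap g = τ)).card ≤ (N.choose (N / 2)) ^ φ := by
    intro τ _
    rcases (S.filter (fun g => τmap g = τ)).eq_empty_or_nonempty with he | ⟨g₀, hg₀⟩
    · simp [he]
    · have hg₀S : g₀ ∈ S := (mem_filter.mp hg₀).1
      have hg₀τ : τmap g₀ = τ := (mem_filter.mp hg₀).2
      have hg₀dvd : cyclotomic m ℚ ∣ Rpoly g₀ := (mem_filter.mp hg₀S).2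
      set V : Fin m → Finset (Fin N → Bool) := fun t =>
        if φ ≤ (t : ℕ) then {τ t} else univ.filter (fun s => sig s = sig (g₀ t)) with hV
      have hsub : S.filter (fun g => τmap g = τ) ⊆ Fintype.piFinset V := by
        intro g hg
        rw [Fintype.mem_piFinset]
        intro t
        have hgS : g ∈ S := (mem_filter.mp hg).1
        have hgτ : τmap g = τ := (mem_filter.mp hg).2
        have hgdvd : cyclotomic m ℚ ∣ Rpoly g := (mem_filter.mp hgS).2
        have tail : ∀ t' : Fin m, φ ≤ (t' : ℕ) → g t' = g₀ t' := by
          intro t' ht'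
          have e1 : τmap g t' = τ t' := congrFun hgτ t'
          have e2 : τmap g₀ t' = τ t' := congrFun hg₀τ t'
          simp only [hτ, if_pos ht'] at e1 e2
          rw [e1, e2]
        by_cases ht : φ ≤ (t : ℕ)
        · simp only [hV, if_pos ht, Finset.mem_singleton]
          rw [← congrFun hgτ t]
          simp [hτ, ht]
        · simp only [hV, if_neg ht, mem_filter, mem_univ, true_and]
          exact sig_eq_of_tail_eq hm hgdvd hg₀dvd tail t
      calc (S.filter (fun g => τmap g = τ)).card
          ≤ (Fintype.piFinset V).card := Finset.card_le_card hsub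
        _ = ∏ t, (V t).card := Fintype.card_piFinset V
        _ ≤ ∏ t : Fin m, (if φ ≤ (t : ℕ) then 1 else N.choose (N / 2)) := by
            apply Finset.prod_le_prod'
            intro t _
            by_cases ht : φ ≤ (t : ℕ)
            · simp [hV, ht]
            · simp only [hV, if_neg ht]
              exact cnt_le N _
        _ = (N.choose (N / 2)) ^ φ := by
            rw [Finset.prod_ite]
            simp only [Finset.prod_const, one_pow, one_mul]
            have hcard : (univ.filter (fun t : Fin m => ¬ φ ≤ (t : ℕ))).card = φ := by
              have he : (univ.filter (fun t : Fin m => ¬ φ ≤ (t : ℕ)))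
                  = (univ.filter (fun t : Fin m => t.val < φ)) := by
                ext t; simp [not_le]
              rw [he]
              exact card_filter_val_lt m φ hφm
            rw [hcard]
  calc ∑ τ ∈ S.image τmap, (S.filter (fun g => τmap g = τ)).card
      ≤ (S.image τmap).card * (N.choose (N / 2)) ^ φ := by
        simpa using Finset.sum_le_card_nsmul _ _ _ hfiber
    _ ≤ 2 ^ ((m - φ) * N) * (N.choose (N / 2)) ^ φ := by
        apply Nat.mul_le_mul_right
        have hinj := Finset.card_le_card_of_injOn
          (s := S.image τmap)
          (f := fun τ => (fun u : Fin (m - φ) => τ (⟨φ + u.val, by omega⟩ : Fin m)))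
          (t := (univ : Finset (Fin (m - φ) → Fin N → Bool))) (fun _ _ => mem_univ _) ?_
        · refine le_trans hinj ?_
          rw [Finset.card_univ, Fintype.card_fun, Fintype.card_fun, Fintype.card_fin,
            Fintype.card_fin, Fintype.card_bool, ← pow_mul, Nat.mul_comm]
        · intro τ hτmem τ' hτ'mem heq
          simp only [Finset.coe_image, Set.mem_image] at hτmem hτ'mem
          obtain ⟨g, -, rfl⟩ := hτmem
          obtain ⟨g', -, rfl⟩ := hτ'mem
          funext t
          by_cases ht : φ ≤ (t : ℕ)
          · have : t = (⟨φ + ((t : ℕ) - φ), by omega⟩ : Fin m) := by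
              ext; simp; omega
            rw [this]
            exact congrFun heq ⟨(t : ℕ) - φ, by omega⟩
          · simp [hτ, ht]


def classEquiv (m N : ℕ) (hm : 0 < m) : Fin m × Fin N ≃ Fin (m * N) where
  toFun p := ⟨p.2.val * m + p.1.val, by
    have h1 : p.1.val < m := p.1.isLt
    have h3 : (p.2.val + 1) * m ≤ N * m := Nat.mul_le_mul_right m p.2.isLt
    have h4 : (p.2.val + 1) * m = p.2.val * m + m := by ring
    have h5 : N * m = m * N := Nat.mul_comm N m
    linarith⟩
  invFun j := (⟨j.val % m, Nat.mod_lt _ hm⟩,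
    ⟨j.val / m, by
      have := j.isLt
      rw [Nat.div_lt_iff_lt_mul hm]
      exact lt_of_lt_of_eq this (Nat.mul_comm m N)⟩)
  left_inv p := by
    ext
    · show (p.2.val * m + p.1.val) % m = p.1.val
      rw [Nat.add_comm, Nat.add_mul_mod_self_right, Nat.mod_eq_of_lt p.1.isLt]
    · show (p.2.val * m + p.1.val) / m = p.2.val
      rw [Nat.add_comm, Nat.add_mul_div_right _ _ hm, Nat.div_eq_of_lt p.1.isLt, Nat.zero_add]
  right_inv j := by
    ext
    show (j.val / m) * m + j.val % m = j.val
    rw [Nat.mul_comm, Nat.div_add_mod]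

lemma Bcount (n m N : ℕ) (hm : 0 < m) (hn : n = m * N) :
    (Bset n m).card
      ≤ 2 ^ ((m - m.totient) * N) * (N.choose (N / 2)) ^ m.totient := by
  unfold Bset
  subst hn
  set E := classEquiv m N hm with hE
  refine le_trans (Finset.card_le_card_of_injOn
    (f := fun b : Fin (m*N) → Bool => (fun t i => b (E (t, i)) : Fin m → Fin N → Bool))
    (t := (univ : Finset (Fin m → Fin N → Bool)).filter
      (fun g => cyclotomic m ℚ ∣ Rpoly g)) ?_ ?_) (Scount m N hm)
  · intro b hb
    simp only [mem_coe, mem_filter, mem_univ, true_and] at hb ⊢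
    -- Φ ∣ Rpoly (Θ b)
    have hQR : ((X : ℚ[X]) ^ m - 1) ∣ (Qpoly b - Rpoly (fun t i => b (E (t, i)))) := by
      have hQ : Qpoly b = ∑ p : Fin m × Fin N, C (sgn (b (E p))) * X ^ ((E p) : ℕ) := by
        rw [Qpoly]
        exact (Fintype.sum_equiv E _ _ (fun p => rfl)).symm
      have hR : Rpoly (fun t i => b (E (t, i)))
          = ∑ p : Fin m × Fin N, C (sgn (b (E p))) * X ^ ((p.1 : ℕ)) := by
        rw [Rpoly]
        rw [Fintype.sum_prod_type]
        refine Finset.sum_congr rfl fun t _ => ?_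
        rw [sig, map_sum, Finset.sum_mul]
      rw [hQ, hR, ← Finset.sum_sub_distrib]
      refine Finset.dvd_sum fun p _ => ?_
      have hval : ((E p : Fin (m*N)) : ℕ) = p.2.val * m + p.1.val := rfl
      rw [hval]
      have hfac : C (sgn (b (E p))) * X ^ (p.2.val * m + p.1.val)
            - C (sgn (b (E p))) * X ^ (p.1.val)
          = (C (sgn (b (E p))) * X ^ (p.1.val)) * ((X ^ m) ^ p.2.val - 1) := by
        rw [pow_add, pow_mul]
        ring
      rw [hfac]
      apply Dvd.dvd.mul_left
      simpa using sub_dvd_pow_sub_pow ((X : ℚ[X]) ^ m) 1 p.2.val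
    have : Rpoly (fun t i => b (E (t, i)))
        = Qpoly b - (Qpoly b - Rpoly (fun t i => b (E (t, i)))) := by ring
    rw [this]
    exact dvd_sub hb (dvd_trans (cyclotomic.dvd_X_pow_sub_one m ℚ) hQR)
  · intro b _ b' _ heq
    funext j
    have h1 := congrFun (congrFun heq (E.symm j).1) (E.symm j).2
    simpa using h1


lemma det_zero_exists_eigen {n : ℕ} (hn : 0 < n) (x : Fin n → ℝ)
    (h : (Matrix.of fun i j : Fin n => x (j - i)).det = 0) :
    ∃ k : Fin n, ∑ j : Fin n, (x j : ℂ)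
      * Complex.exp (2 * Real.pi * Complex.I / n) ^ ((j : ℕ) * (k : ℕ)) = 0 := by
  haveI : NeZero n := ⟨hn.ne'⟩
  set ζ : ℂ := Complex.exp (2 * Real.pi * Complex.I / n) with hζdef
  have hζ : IsPrimitiveRoot ζ n := Complex.isPrimitiveRoot_exp n hn.ne'
  have hζn : ζ ^ n = 1 := hζ.pow_eq_one
  have hred : ∀ a : ℕ, ζ ^ a = ζ ^ (a % n) := by
    intro a
    conv_lhs => rw [← Nat.div_add_mod a n]
    rw [pow_add, pow_mul, hζn, one_pow, one_mul]
  set lam : Fin n → ℂ := fun k => ∑ j : Fin n, (x j : ℂ) * ζ ^ ((j : ℕ) * (k : ℕ)) with hlam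
  set B : Matrix (Fin n) (Fin n) ℂ :=
    (Matrix.of fun i j : Fin n => x (j - i)).map Complex.ofRealHom with hB
  have hBdet : B.det = 0 := by
    rw [hB, ← RingHom.mapMatrix_apply, ← RingHom.map_det, h, map_zero]
  set V : Matrix (Fin n) (Fin n) ℂ := Matrix.vandermonde (fun i : Fin n => ζ ^ (i : ℕ)) with hV
  set D : Matrix (Fin n) (Fin n) ℂ := Matrix.diagonal lam with hD
  have hcomm : B * V = V * D := by
    ext i k
    rw [Matrix.mul_apply, Matrix.mul_diagonal]
    have hstep : ∀ j : Fin n, B i j * V j k = (x (j - i) : ℂ) * ζ ^ ((j : ℕ) * (k : ℕ)) := by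
      intro j
      rw [hB, hV]
      simp only [Matrix.map_apply, Matrix.of_apply, Matrix.vandermonde_apply, ← pow_mul]
      rfl
    rw [Finset.sum_congr rfl (fun j _ => hstep j)]
    rw [← Equiv.sum_comp (Equiv.addLeft i)
      (fun j : Fin n => (x (j - i) : ℂ) * ζ ^ ((j : ℕ) * (k : ℕ)))]
    have hterm : ∀ t : Fin n, (x ((Equiv.addLeft i) t - i) : ℂ)
        * ζ ^ ((((Equiv.addLeft i) t : Fin n) : ℕ) * (k : ℕ))
        = (ζ ^ ((i : ℕ) * (k : ℕ))) * ((x t : ℂ) * ζ ^ ((t : ℕ) * (k : ℕ))) := by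
      intro t
      have h1 : (Equiv.addLeft i) t = i + t := rfl
      have h2 : i + t - i = t := add_sub_cancel_left i t
      have h3 : ((i + t : Fin n) : ℕ) = ((i : ℕ) + (t : ℕ)) % n := Fin.val_add i t
      rw [h1, h2, h3]
      have h4 : ζ ^ ((((i : ℕ) + (t : ℕ)) % n) * (k : ℕ))
          = ζ ^ (((i : ℕ) + (t : ℕ)) * (k : ℕ)) := by
        rw [hred ((((i : ℕ) + (t : ℕ)) % n) * (k : ℕ)),
          hred ((((i : ℕ) + (t : ℕ))) * (k : ℕ))]
        congr 1
        exact Nat.ModEq.mul_right (k : ℕ) (Nat.mod_modEq _ n)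
      rw [h4, add_mul, pow_add]
      ring
    rw [Finset.sum_congr rfl (fun t _ => hterm t), ← Finset.mul_sum]
    simp only [hV, hlam, Matrix.vandermonde_apply]
    rw [← pow_mul]
  have hVdet : V.det ≠ 0 := by
    rw [hV, Matrix.det_vandermonde_ne_zero_iff]
    intro a b hab
    exact Fin.ext (hζ.pow_inj a.isLt b.isLt hab)
  have hdet2 : V.det * D.det = 0 := by
    have := congrArg Matrix.det hcomm
    rw [Matrix.det_mul, Matrix.det_mul, hBdet, zero_mul] at this
    exact this.symm
  have hDdet : D.det = 0 := by
    rcases mul_eq_zero.mp hdet2 with h' | h'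
    · exact absurd h' hVdet
    · exact h'
  rw [hD, Matrix.det_diagonal] at hDdet
  obtain ⟨k, -, hk⟩ := Finset.prod_eq_zero_iff.mp hDdet
  exact ⟨k, hk⟩


lemma eigen_to_dvd {n : ℕ} (hn3 : 3 ≤ n) (hodd : Odd n) (b : Fin n → Bool) (k : Fin n)
    (h : ∑ j : Fin n, (algebraMap ℚ ℂ) (sgn (b j))
      * Complex.exp (2 * Real.pi * Complex.I / n) ^ ((j : ℕ) * (k : ℕ)) = 0) :
    ∃ m, m ∈ n.divisors.filter (fun m => 1 < m) ∧ cyclotomic m ℚ ∣ Qpoly b := by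
  have hn : 0 < n := by omega
  haveI : NeZero n := ⟨hn.ne'⟩
  set ζ : ℂ := Complex.exp (2 * Real.pi * Complex.I / n) with hζdef
  have hζ : IsPrimitiveRoot ζ n := Complex.isPrimitiveRoot_exp n hn.ne'
  rcases eq_or_ne k 0 with rfl | hk0
  · exfalso
    have hsum : ∑ j : Fin n, (algebraMap ℚ ℂ) (sgn (b j)) = 0 := by
      have : ∀ j : Fin n, (j : ℕ) * ((0 : Fin n) : ℕ) = 0 := by intro j; simp
      rw [← h]
      refine Finset.sum_congr rfl fun j _ => ?_
      rw [this j, pow_zero, mul_one]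
    rw [← map_sum] at hsum
    have hsum2 : (algebraMap ℚ ℂ) (sig b) = (algebraMap ℚ ℂ) 0 := by
      rw [map_zero, sig]; exact hsum
    have hsig : sig b = 0 := (algebraMap ℚ ℂ).injective hsum2
    rw [sig_eq] at hsig
    have hcast : (n : ℚ) = 2 * ((univ.filter (fun i => b i = true)).card : ℚ) := by linarith
    have : n = 2 * (univ.filter (fun i => b i = true)).card := by exact_mod_cast hcast
    rcases hodd with ⟨t, ht⟩
    omega
  · have hkval : 0 < (k : ℕ) := by
      rcases Nat.eq_zero_or_pos (k : ℕ) with h0 | h1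
      · exact absurd (Fin.ext h0 : k = 0) hk0
      · exact h1
    set g := Nat.gcd n (k : ℕ) with hg
    have hgpos : 0 < g := Nat.gcd_pos_of_pos_left _ hn
    have hgdvdn : g ∣ n := Nat.gcd_dvd_left _ _
    have hgdvdk : g ∣ (k : ℕ) := Nat.gcd_dvd_right _ _
    have hglt : g < n := lt_of_le_of_lt (Nat.le_of_dvd hkval hgdvdk) k.isLt
    set m := n / g with hm
    have hmdvd : m ∣ n := Nat.div_dvd_of_dvd hgdvdn
    have hnm : n = g * m := by rw [hm, Nat.mul_div_cancel' hgdvdn]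
    have hm1 : 1 < m := by
      rcases Nat.lt_or_ge m 2 with h2 | h2
      · interval_cases m <;> omega
      · omega
    have hprim : IsPrimitiveRoot (ζ ^ g) m := IsPrimitiveRoot.pow hn hζ hnm
    have hcop : Nat.Coprime ((k : ℕ) / g) m := by
      have := Nat.coprime_div_gcd_div_gcd (m := n) (n := (k : ℕ)) hgpos
      exact this.symm
    have hprim2 : IsPrimitiveRoot ((ζ ^ g) ^ ((k : ℕ) / g)) m := hprim.pow_of_coprime _ hcop
    have hμ : (ζ ^ g) ^ ((k : ℕ) / g) = ζ ^ (k : ℕ) := by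
      rw [← pow_mul, Nat.mul_div_cancel' hgdvdk]
    rw [hμ] at hprim2
    have haev : (aeval (ζ ^ (k : ℕ))) (Qpoly b) = 0 := by
      rw [Qpoly, map_sum]
      rw [← h]
      refine Finset.sum_congr rfl fun j _ => ?_
      rw [map_mul, aeval_C, map_pow, aeval_X, ← pow_mul, Nat.mul_comm]
    have hdvd : minpoly ℚ (ζ ^ (k : ℕ)) ∣ Qpoly b := minpoly.dvd ℚ _ haev
    rw [← cyclotomic_eq_minpoly_rat hprim2 (by omega)] at hdvd
    exact ⟨m, by rw [mem_filter, Nat.mem_divisors]; exact ⟨⟨hmdvd, hn.ne'⟩, hm1⟩, hdvd⟩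


lemma choose_le_two_pow {N r : ℕ} (hN : 1 ≤ N) : N.choose r ≤ 2 ^ (N - 1) := by
  obtain ⟨M, rfl⟩ : ∃ M, N = M + 1 := ⟨N - 1, by omega⟩
  simp only [Nat.add_sub_cancel]
  rcases Nat.eq_zero_or_pos r with rfl | hr
  · simpa using Nat.one_le_two_pow
  rcases Nat.lt_or_ge M (r : ℕ) with hbig | hsmall
  · -- r ≥ M + 1
    rcases Nat.lt_or_ge (M+1) r with h2 | h2
    · rw [Nat.choose_eq_zero_of_lt h2]; positivity
    · have : r = M + 1 := by omega
      subst this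
      simpa [Nat.choose_self] using Nat.one_le_two_pow
  · obtain ⟨s, rfl⟩ : ∃ s, r = s + 1 := ⟨r - 1, by omega⟩
    rw [Nat.choose_succ_succ]
    have hmem1 : s ∈ Finset.range (M + 1) := by simp; omega
    have hmem2 : s + 1 ∈ Finset.range (M + 1) := by simp; omega
    have hsum : M.choose s + M.choose (s+1)
        = ∑ i ∈ ({s, s+1} : Finset ℕ), M.choose i := by
      rw [Finset.sum_pair (by omega)]
    rw [hsum]
    calc ∑ i ∈ ({s, s+1} : Finset ℕ), M.choose i
        ≤ ∑ i ∈ Finset.range (M+1), M.choose i := by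
          apply Finset.sum_le_sum_of_subset
          intro i hi
          simp at hi
          rcases hi with rfl | rfl <;> simp <;> omega
      _ = 2 ^ M := Nat.sum_range_choose M

lemma perm_real (n m : ℕ) (hn3 : 3 ≤ n) (hodd : Odd n)
    (hmem : m ∈ n.divisors.filter (fun m => 1 < m)) :
    ((Bset n m).card : ℝ) * (1/2)^n ≤ min (((2:ℝ) ^ m.totient)⁻¹) (4 / n) := by
  rw [mem_filter, Nat.mem_divisors] at hmem
  obtain ⟨⟨hmdvd, hn0⟩, hm1⟩ := hmem
  have hmodd : Odd m := by
    rcases Nat.even_or_odd m with he | ho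
    · exfalso
      have : (2 : ℕ) ∣ n := dvd_trans he.two_dvd hmdvd
      rcases hodd with ⟨t, ht⟩; omega
    · exact ho
  have hm3 : 3 ≤ m := by
    rcases hmodd with ⟨t, ht⟩; omega
  set N := n / m with hN
  set φ := m.totient with hφ
  have hnmN : n = m * N := (Nat.mul_div_cancel' hmdvd).symm
  have hN1 : 1 ≤ N := by
    rcases Nat.eq_zero_or_pos N with h0 | h1
    · exfalso; rw [h0, Nat.mul_zero] at hnmN; omega
    · exact h1
  have hφ2 : 2 ≤ φ := two_le_totient hm3
  have hφm : φ ≤ m := Nat.totient_le m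
  have hm2φ : m ≤ 2 ^ φ := le_two_pow_totient hmodd
  set c := N.choose (N / 2) with hc
  have hcard := Bcount n m N (by omega) hnmN
  -- obtain decompositions
  obtain ⟨a, ha⟩ : ∃ a, m = φ + a := ⟨m - φ, by omega⟩
  obtain ⟨e, he⟩ : ∃ e, φ = 2 + e := ⟨φ - 2, by omega⟩
  obtain ⟨d, hd⟩ : ∃ d, N = 1 + d := ⟨N - 1, by omega⟩
  have hcle : c ≤ 2 ^ d := by
    have h := choose_le_two_pow (N := N) (r := N / 2) hN1
    have hd' : N - 1 = d := by omega
    rwa [hd'] at h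
  have hc2N : c ^ 2 * N ≤ 2 ^ (2 * N) := by
    calc c ^ 2 * N ≤ 4 ^ N := choose_half_sq N
      _ = 2 ^ (2 * N) := by rw [pow_mul]; norm_num
  -- KEY nat bound 1 : card * 2^φ ≤ 2^n
  have hkey1 : (2 ^ ((m - φ) * N) * c ^ φ) * 2 ^ φ ≤ 2 ^ n := by
    have hma : m - φ = a := by omega
    calc (2 ^ ((m - φ) * N) * c ^ φ) * 2 ^ φ
        ≤ (2 ^ ((m - φ) * N) * (2 ^ d) ^ φ) * 2 ^ φ := by
          apply Nat.mul_le_mul_right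
          apply Nat.mul_le_mul_left
          exact Nat.pow_le_pow_left hcle φ
      _ = 2 ^ (a * N + d * φ + φ) := by rw [hma, ← pow_mul, ← pow_add, ← pow_add]
      _ = 2 ^ n := by
          congr 1
          rw [hnmN, ha, hd, he]; ring
  -- KEY nat bound 2 : card * n ≤ 4 * 2^n
  have hkey2 : (2 ^ ((m - φ) * N) * c ^ φ) * n ≤ 4 * 2 ^ n := by
    have hma : m - φ = a := by omega
    have hsplit : c ^ φ = c ^ e * c ^ 2 := by rw [he, ← pow_add]; ring_nf
    calc (2 ^ ((m - φ) * N) * c ^ φ) * n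
        = 2 ^ (a * N) * c ^ e * (c ^ 2 * N) * m := by
          rw [hma, hsplit, hnmN]; ring
      _ ≤ 2 ^ (a * N) * (2 ^ d) ^ e * (2 ^ (2 * N)) * 2 ^ φ := by
          apply Nat.mul_le_mul
          apply Nat.mul_le_mul
          apply Nat.mul_le_mul_left
          · exact Nat.pow_le_pow_left hcle e
          · exact hc2N
          · exact hm2φ
      _ = 2 ^ (a * N + d * e + 2 * N + φ) := by
          rw [← pow_mul, ← pow_add, ← pow_add, ← pow_add]
      _ = 4 * 2 ^ n := by
          have hexp : a * N + d * e + 2 * N + φ = n + 2 := by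
            rw [hnmN, ha, hd, he]; ring
          rw [hexp, pow_add]; ring
  -- pass to ℝ
  have h2npos : (0:ℝ) < 2 ^ n := by positivity
  have h2φpos : (0:ℝ) < 2 ^ φ := by positivity
  have hnposR : (0:ℝ) < n := by
    have : 0 < n := by omega
    exact_mod_cast this
  have hcardR : ((Bset n m).card : ℝ) ≤ ((2 ^ ((m - φ) * N) * c ^ φ : ℕ) : ℝ) := by
    exact_mod_cast hcard
  have hform : ((Bset n m).card : ℝ) * (1/2)^n
      ≤ ((2 ^ ((m - φ) * N) * c ^ φ : ℕ) : ℝ) / 2 ^ n := by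
    have heq : ((Bset n m).card : ℝ) * (1/2)^n = ((Bset n m).card : ℝ) / 2^n := by
      rw [div_pow, one_pow, mul_one_div]
    rw [heq]
    gcongr
  refine le_min (le_trans hform ?_) (le_trans hform ?_)
  · have h1R : ((2 ^ ((m - φ) * N) * c ^ φ : ℕ) : ℝ) * 2 ^ φ ≤ 2 ^ n := by
      exact_mod_cast hkey1
    have goal' : ((2 ^ ((m - φ) * N) * c ^ φ : ℕ) : ℝ) ≤ 2^n / 2^φ := by
      rw [le_div_iff₀ h2φpos]; exact h1R
    calc ((2 ^ ((m - φ) * N) * c ^ φ : ℕ) : ℝ) / 2^n ≤ (2^n / 2^φ) / 2^n := by gcongr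
      _ = ((2:ℝ)^φ)⁻¹ := by field_simp
  · have h2R : ((2 ^ ((m - φ) * N) * c ^ φ : ℕ) : ℝ) * n ≤ 4 * 2 ^ n := by
      exact_mod_cast hkey2
    rw [div_le_div_iff₀ h2npos hnposR]
    exact h2R

end CirculantAux

theorem circulant_sign_matrix_singularity_odd
    : ∃ c₃ : ℝ, 0 < c₃ ∧
      ∀ (n : ℕ), Odd n → 3 ≤ n →
      ∀ (Ω : Type) [MeasurableSpace Ω] (P : Measure Ω), IsProbabilityMeasure P →
      ∀ X : Fin n → Ω → ℝ, (∀ j, Measurable (X j)) →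
        iIndepFun X P →
        (∀ j, P {ω | X j ω = 1} = 1 / 2 ∧ P {ω | X j ω = -1} = 1 / 2) →
        (P {ω | (Matrix.of fun i j : Fin n => X (j - i) ω).det = 0}).toReal ≤
          min (c₃ * (n.divisors.card : ℝ) / n)
            (∑ m ∈ n.divisors.filter (fun m => 1 < m), ((2 : ℝ) ^ m.totient)⁻¹) := by
  classical
  refine ⟨4, by norm_num, ?_⟩
  intro n hodd hn3 Ω mΩ P hP X hX hind hhalf
  have hn : 0 < n := by omega
  haveI : NeZero n := ⟨hn.ne'⟩
  set D := n.divisors.filter (fun m => 1 < m) with hD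
  set xb : (Fin n → Bool) → Fin n → ℝ := fun b j => if b j then 1 else -1 with hxb
  set A : (Fin n → Bool) → Set Ω := fun b => ⋂ j, X j ⁻¹' {xb b j} with hA
  have hAb : ∀ b, P (A b) = (1/2 : ℝ≥0∞) ^ n := by
    intro b
    have hmi := hind.measure_inter_preimage_eq_mul (S := Finset.univ)
      (sets := fun j => ({xb b j} : Set ℝ)) (fun i _ => measurableSet_singleton _)
    have he : (⋂ i ∈ Finset.univ, X i ⁻¹' {xb b i}) = A b := by
      rw [hA]; simp
    rw [he] at hmi
    rw [hmi]
    have hfac : ∀ j : Fin n, P (X j ⁻¹' {xb b j}) = 1/2 := by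
      intro j
      have h1 : X j ⁻¹' {(1:ℝ)} = {ω | X j ω = 1} := rfl
      have h2 : X j ⁻¹' {(-1:ℝ)} = {ω | X j ω = -1} := rfl
      cases hbj : b j
      · have hv : xb b j = -1 := by simp [hxb, hbj]
        rw [hv, h2, (hhalf j).2]
      · have hv : xb b j = 1 := by simp [hxb, hbj]
        rw [hv, h1, (hhalf j).1]
    rw [Finset.prod_congr rfl (fun j _ => hfac j), Finset.prod_const, Finset.card_univ,
      Fintype.card_fin]
  set G : Set Ω := ⋃ j, {ω | ¬ (X j ω = 1 ∨ X j ω = -1)} with hG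
  have hGnull : P G = 0 := by
    rw [hG, measure_iUnion_null_iff]
    intro j
    have hm1 : MeasurableSet {ω | X j ω = 1} := hX j (measurableSet_singleton 1)
    have hm2 : MeasurableSet {ω | X j ω = -1} := hX j (measurableSet_singleton (-1))
    have hdisj : Disjoint {ω | X j ω = 1} {ω | X j ω = -1} := by
      rw [Set.disjoint_left]
      intro ω h1 h2
      simp only [Set.mem_setOf_eq] at h1 h2
      rw [h1] at h2; norm_num at h2
    have hu : P ({ω | X j ω = 1} ∪ {ω | X j ω = -1}) = 1 := by
      rw [measure_union hdisj hm2, (hhalf j).1, (hhalf j).2, ENNReal.add_halves]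
    have hcompl : {ω | ¬ (X j ω = 1 ∨ X j ω = -1)} = ({ω | X j ω = 1} ∪ {ω | X j ω = -1})ᶜ := by
      ext ω; simp [not_or]
    rw [hcompl, prob_compl_eq_zero_iff (hm1.union hm2)]
    exact hu
  have hincl : {ω | (Matrix.of fun i j : Fin n => X (j - i) ω).det = 0}
      ⊆ (⋃ m ∈ D, ⋃ b ∈ Bset n m, A b) ∪ G := by
    intro ω hω
    by_cases hg : ω ∈ G
    · exact Or.inr hg
    · refine Or.inl ?_
      rw [hG] at hg
      simp only [Set.mem_iUnion, Set.mem_setOf_eq, not_exists, not_not] at hg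
      set b : Fin n → Bool := fun j => decide (X j ω = 1) with hbdef
      have hxbb : ∀ j, X j ω = xb b j := by
        intro j
        rcases hg j with h | h
        · simp [hxb, hbdef, h]
        · have hne : ¬ (X j ω = 1) := by rw [h]; norm_num
          simp [hxb, hbdef, h, hne]
      have hdet : (Matrix.of fun i j : Fin n => xb b (j - i)).det = 0 := by
        have hmat : (Matrix.of fun i j : Fin n => X (j - i) ω)
            = Matrix.of fun i j : Fin n => xb b (j - i) := by
          ext i j
          exact hxbb (j - i)
        rw [← hmat]
        exact hω
      obtain ⟨k, hk⟩ := det_zero_exists_eigen hn (fun j => xb b j) hdet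
      have hk' : ∑ j : Fin n, (algebraMap ℚ ℂ) (sgn (b j))
          * Complex.exp (2 * Real.pi * Complex.I / n) ^ ((j:ℕ) * (k:ℕ)) = 0 := by
        rw [← hk]
        refine Finset.sum_congr rfl fun j _ => ?_
        congr 1
        cases hbj : b j <;> simp [hxb, sgn, hbj]
      obtain ⟨m, hmD, hdvd⟩ := eigen_to_dvd hn3 hodd b k hk'
      refine Set.mem_biUnion (show m ∈ D from hmD) ?_
      refine Set.mem_biUnion
        (show b ∈ Bset n m by unfold Bset; rw [mem_filter]; exact ⟨mem_univ _, hdvd⟩) ?_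
      exact Set.mem_iInter.mpr fun j => hxbb j
  have hbound : P {ω | (Matrix.of fun i j : Fin n => X (j - i) ω).det = 0}
      ≤ ∑ m ∈ D, ((Bset n m).card : ℝ≥0∞) * (1/2) ^ n := by
    refine le_trans (measure_mono hincl) ?_
    refine le_trans (measure_union_le _ _) ?_
    rw [hGnull, add_zero]
    refine le_trans (measure_biUnion_finset_le D _) ?_
    refine Finset.sum_le_sum fun m _ => ?_
    refine le_trans (measure_biUnion_finset_le (Bset n m) _) ?_
    rw [Finset.sum_congr rfl (fun b _ => hAb b), Finset.sum_const, nsmul_eq_mul]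
  have hhalf_ne : ((1:ℝ≥0∞)/2) ^ n ≠ ⊤ := by
    apply ENNReal.pow_ne_top
    simp
  have hfin : ∀ m ∈ D, ((Bset n m).card : ℝ≥0∞) * (1/2) ^ n ≠ ⊤ := fun m _ =>
    ENNReal.mul_ne_top (ENNReal.natCast_ne_top _) hhalf_ne
  have hsum_ne : (∑ m ∈ D, ((Bset n m).card : ℝ≥0∞) * (1/2) ^ n) ≠ ⊤ := by
    exact (ENNReal.sum_lt_top.mpr (fun m hm => lt_top_iff_ne_top.mpr (hfin m hm))).ne
  have htr := ENNReal.toReal_mono hsum_ne hbound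
  rw [ENNReal.toReal_sum hfin] at htr
  have hterm_eq : ∀ m ∈ D, (((Bset n m).card : ℝ≥0∞) * (1/2) ^ n).toReal
      = ((Bset n m).card : ℝ) * (1/2 : ℝ)^n := by
    intro m _
    rw [ENNReal.toReal_mul, ENNReal.toReal_pow, ENNReal.toReal_div]
    simp
  rw [Finset.sum_congr rfl hterm_eq] at htr
  refine le_trans htr ?_
  have hterm := fun m (hm : m ∈ D) => perm_real n m hn3 hodd hm
  refine le_min ?_ ?_
  · calc ∑ m ∈ D, ((Bset n m).card : ℝ) * (1/2 : ℝ)^n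
        ≤ ∑ _m ∈ D, 4/(n:ℝ) :=
          Finset.sum_le_sum (fun m hm => le_trans (hterm m hm) (min_le_right _ _))
      _ = D.card * (4/(n:ℝ)) := by rw [Finset.sum_const, nsmul_eq_mul]
      _ ≤ n.divisors.card * (4/(n:ℝ)) := by
          apply mul_le_mul_of_nonneg_right
          · exact_mod_cast Finset.card_filter_le _ _
          · positivity
      _ = 4 * (n.divisors.card:ℝ) / n := by ring
  · exact Finset.sum_le_sum (fun m hm => le_trans (hterm m hm) (min_le_left _ _))
end

section
/- Let $n \ge 3$ be prime and let $X_0, \dots, X_{n-1}$ be independent random variables with $\mathbb{P}[X_j = -1] = \mathbb{P}[X_j = 1] = 1/2$. Then the circulant matrix $\mathcal{C}_n$ with first row $X_0, \dots, X_{n-1}$ satisfies $\mathbb{P}[\mathcal{C}_n \text{ is singular}] = 2^{-n+1}$; this is exactly the probability that all entries $X_0, \dots, X_{n-1}$ are equal. -/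
open Polynomial in
lemma circ_det_zero_iff (n : ℕ) (hp : n.Prime) (hn : 3 ≤ n)
    (x : Fin n → ℝ) (hx : ∀ j, x j = 1 ∨ x j = -1) :
    (Matrix.of fun i j : Fin n => x (j - i)).det = 0 ↔ ∀ j j' : Fin n, x j = x j' := by
  have hn0 : (n : ℕ) ≠ 0 := by omega
  haveI : NeZero n := ⟨hn0⟩
  constructor
  · intro hdet
    -- setup
    set ζ : ℂ := Complex.exp (2 * Real.pi * Complex.I / n) with hζdef
    have hζ : IsPrimitiveRoot ζ n := Complex.isPrimitiveRoot_exp n hn0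
    have hζ1 : ζ ^ n = 1 := hζ.pow_eq_one
    have hpow : ∀ s t : ℕ, s % n = t % n → ζ ^ s = ζ ^ t := by
      intro s t h
      rw [pow_eq_pow_mod s hζ1, pow_eq_pow_mod t hζ1, h]
    set W : Matrix (Fin n) (Fin n) ℂ := Matrix.vandermonde (fun i : Fin n => ζ ^ i.val) with hW
    have hWdet : W.det ≠ 0 := by
      rw [hW, Matrix.det_vandermonde_ne_zero_iff]
      intro i j hij
      exact Fin.ext (hζ.pow_inj i.isLt j.isLt hij)
    set g : Fin n → ℂ := fun k => ∑ m : Fin n, (x m : ℂ) * ζ ^ (m.val * k.val) with hg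
    set Mc : Matrix (Fin n) (Fin n) ℂ :=
      (Matrix.of fun i j : Fin n => x (j - i)).map (algebraMap ℝ ℂ) with hMc
    have hdetc : Mc.det = 0 := by
      rw [hMc, ← RingHom.mapMatrix_apply, ← RingHom.map_det, hdet, map_zero]
    have hMW : Mc * W = W * Matrix.diagonal g := by
      ext i k
      rw [Matrix.mul_apply, Matrix.mul_diagonal]
      have hre : ∀ j : Fin n, Mc i j * W j k = (x (j - i) : ℂ) * ζ ^ (j.val * k.val) := by
        intro j
        simp [hMc, hW, Matrix.vandermonde, ← pow_mul, Complex.coe_algebraMap]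
      calc ∑ j : Fin n, Mc i j * W j k
          = ∑ m : Fin n, (x m : ℂ) * ζ ^ ((m + i).val * k.val) := by
            rw [← Equiv.sum_comp (Equiv.addRight i) (fun j => Mc i j * W j k)]
            refine Finset.sum_congr rfl fun m _ => ?_
            show Mc i (m + i) * W (m + i) k = _
            rw [hre (m + i), add_sub_cancel_right]
        _ = ∑ m : Fin n, (ζ ^ (i.val * k.val) * ((x m : ℂ) * ζ ^ (m.val * k.val))) := by
            refine Finset.sum_congr rfl fun m _ => ?_
            have hz : ζ ^ ((m + i).val * k.val) = ζ ^ (i.val * k.val) * ζ ^ (m.val * k.val) := by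
              rw [← pow_add]
              apply hpow
              have h1 : (m + i).val = (m.val + i.val) % n := Fin.val_add m i
              calc (m + i).val * k.val % n = ((m.val + i.val) % n) * k.val % n := by rw [h1]
                _ = (m.val + i.val) * k.val % n := (Nat.mod_modEq _ n).mul_right k.val
                _ = (i.val * k.val + m.val * k.val) % n := by ring_nf
            rw [hz]; ring
        _ = W i k * g k := by
            rw [← Finset.mul_sum, hg]
            simp [hW, Matrix.vandermonde, ← pow_mul]
    have hdetprod : Mc.det = ∏ k : Fin n, g k := by
      have h := congrArg Matrix.det hMW
      rw [Matrix.det_mul, Matrix.det_mul, Matrix.det_diagonal, mul_comm Mc.det W.det] at h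
      exact mul_left_cancel₀ hWdet h
    have hex : ∃ k : Fin n, g k = 0 := by
      rw [hdetc] at hdetprod
      obtain ⟨k, -, hk⟩ := Finset.prod_eq_zero_iff.mp hdetprod.symm
      exact ⟨k, hk⟩
    -- rational coefficient function
    set y : Fin n → ℚ := fun j => if x j = 1 then 1 else -1 with hydef
    have hy : ∀ j, ((y j : ℚ) : ℝ) = x j := by
      intro j
      rcases hx j with h | h <;> rw [hydef] <;> simp only [h] <;> norm_num
    have hyC : ∀ j, ((y j : ℚ) : ℂ) = (x j : ℂ) := by
      intro j
      rw [show ((y j : ℚ) : ℂ) = (((y j : ℚ) : ℝ) : ℂ) by push_cast; ring, hy]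
    have hy1 : ∀ j, y j = 1 ∨ y j = -1 := by
      intro j; rcases hx j with h | h <;> rw [hydef] <;> simp only [h] <;> norm_num
    obtain ⟨k, hk⟩ := hex
    rcases eq_or_ne k.val 0 with hk0 | hk0
    · -- k = 0 : sum of ±1 is odd, nonzero; contradiction
      exfalso
      have hodd : Odd n := hp.odd_of_ne_two (by omega)
      have hsumR : (∑ m : Fin n, x m) = 0 := by
        have hC : ((∑ m : Fin n, x m : ℝ) : ℂ) = 0 := by
          push_cast
          rw [← hk, hg]
          refine Finset.sum_congr rfl fun m _ => ?_
          rw [hk0, Nat.mul_zero, pow_zero, mul_one]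
        exact_mod_cast hC
      set ε : Fin n → ℤ := fun j => if x j = 1 then 1 else -1 with hεdef
      have hε : ∀ j, ((ε j : ℤ) : ℝ) = x j := by
        intro j; rcases hx j with h | h <;> rw [hεdef] <;> simp only [h] <;> norm_num
      have hsumZ : (∑ m : Fin n, ε m) = 0 := by
        have hZ : ((∑ m : Fin n, ε m : ℤ) : ℝ) = 0 := by
          rw [Int.cast_sum, Finset.sum_congr rfl (fun m _ => hε m), hsumR]
        exact_mod_cast hZ
      have h2 : ((∑ m : Fin n, ε m : ℤ) : ZMod 2) = 1 := by
        have hone : ∀ m : Fin n, ((ε m : ℤ) : ZMod 2) = 1 := by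
          intro m
          have hm : ε m = 1 ∨ ε m = -1 := by
            rw [hεdef]; dsimp only; split_ifs <;> simp
          rcases hm with h | h <;> rw [h] <;> decide
        rw [Int.cast_sum, Finset.sum_congr rfl (fun m _ => hone m), Finset.sum_const,
          Finset.card_univ, Fintype.card_fin, nsmul_eq_mul, mul_one,
          ← ZMod.natCast_mod n 2, Nat.odd_iff.mp hodd, Nat.cast_one]
      rw [hsumZ] at h2
      exact absurd h2 (by decide)
    · -- k ≠ 0 : cyclotomic argument
      haveI : Fact n.Prime := ⟨hp⟩
      have hcop : (k.val).Coprime n := by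
        refine Nat.Coprime.symm ((Nat.Prime.coprime_iff_not_dvd hp).mpr ?_)
        intro hd
        have := Nat.le_of_dvd (Nat.pos_of_ne_zero hk0) hd
        have := k.isLt
        omega
      have hμ : IsPrimitiveRoot (ζ ^ k.val) n := hζ.pow_of_coprime k.val hcop
      set f : Polynomial ℚ := ∑ m : Fin n, Polynomial.C (y m) * Polynomial.X ^ (m.val) with hf
      have hcoeff : ∀ m : Fin n, f.coeff m.val = y m := by
        intro m
        rw [hf, Polynomial.finset_sum_coeff]
        rw [Finset.sum_eq_single m]
        · simp
        · intro b _ hb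
          rw [Polynomial.coeff_C_mul, Polynomial.coeff_X_pow,
            if_neg (fun h => hb (Fin.ext h.symm)), mul_zero]
        · simp
      have hf0 : f ≠ 0 := by
        intro h
        have h0 := hcoeff ⟨0, by omega⟩
        rw [h] at h0
        rcases hy1 ⟨0, by omega⟩ with h1 | h1 <;> rw [h1] at h0 <;> simp at h0
      have heval : Polynomial.aeval (ζ ^ k.val) f = 0 := by
        rw [hf, map_sum, ← hk, hg]
        refine Finset.sum_congr rfl fun m _ => ?_
        rw [map_mul, map_pow, Polynomial.aeval_C, Polynomial.aeval_X, ← pow_mul, mul_comm k.val m.val]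
        rw [show (algebraMap ℚ ℂ) (y m) = ((y m : ℚ) : ℂ) from rfl, hyC]
      have hdvd : Polynomial.cyclotomic n ℚ ∣ f := by
        rw [Polynomial.cyclotomic_eq_minpoly_rat hμ (by omega)]
        exact minpoly.dvd ℚ _ heval
      obtain ⟨q, hq⟩ := hdvd
      have hΦ0 : Polynomial.cyclotomic n ℚ ≠ 0 := Polynomial.cyclotomic_ne_zero n ℚ
      have hq0 : q ≠ 0 := by
        intro h; rw [h, mul_zero] at hq; exact hf0 hq
      have hdegf : f.natDegree ≤ n - 1 := by
        rw [hf]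
        refine Polynomial.natDegree_sum_le_of_forall_le _ _ fun m _ => ?_
        exact le_trans (Polynomial.natDegree_C_mul_X_pow_le _ _) (by have := m.isLt; omega)
      have hdegΦ : (Polynomial.cyclotomic n ℚ).natDegree = n - 1 := by
        rw [Polynomial.natDegree_cyclotomic, Nat.totient_prime hp]
      have hqdeg : q.natDegree = 0 := by
        have := Polynomial.natDegree_mul hΦ0 hq0
        rw [← hq, hdegΦ] at this
        omega
      obtain ⟨c, hc⟩ : ∃ c, q = Polynomial.C c := ⟨q.coeff 0, Polynomial.eq_C_of_natDegree_eq_zero hqdeg⟩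
      have hΦcoeff : ∀ m : Fin n, (Polynomial.cyclotomic n ℚ).coeff m.val = 1 := by
        intro m
        rw [Polynomial.cyclotomic_prime]
        rw [Polynomial.finset_sum_coeff]
        rw [Finset.sum_eq_single m.val]
        · simp
        · intro b _ hb
          rw [Polynomial.coeff_X_pow, if_neg (fun h => hb h.symm)]
        · intro h
          exact absurd (Finset.mem_range.mpr m.isLt) h
      have hyc : ∀ m : Fin n, y m = c := by
        intro m
        have := hcoeff m
        rw [hq, hc, Polynomial.coeff_mul_C, hΦcoeff m, one_mul] at this
        exact this.symm
      intro j j'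
      rw [← hy j, ← hy j', hyc j, hyc j']
  · intro h
    apply Matrix.det_zero_of_row_eq (i := (0 : Fin n)) (j := 1)
    · intro h01
      have := congrArg Fin.val h01
      simp [Fin.val_one'] at this
      omega
    · funext j
      exact h _ _

open MeasureTheory ProbabilityTheory
open scoped ENNReal

theorem circulant_sign_matrix_singularity_prime
    {Ω : Type*} [MeasurableSpace Ω] (P : Measure Ω) [IsProbabilityMeasure P]
    (n : ℕ) (hp : n.Prime) (hn : 3 ≤ n)
    (X : Fin n → Ω → ℝ) (hmeas : ∀ j, Measurable (X j))
    (hindep : iIndepFun X P)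
    (hdist : ∀ j, P {ω | X j ω = 1} = 1 / 2 ∧ P {ω | X j ω = -1} = 1 / 2) :
    (P {ω | (Matrix.of fun i j : Fin n => X (j - i) ω).det = 0}).toReal =
        (1 / 2 : ℝ) ^ (n - 1) ∧
      P {ω | (Matrix.of fun i j : Fin n => X (j - i) ω).det = 0} =
        P {ω | ∀ j j' : Fin n, X j ω = X j' ω} := by
  haveI : NeZero n := ⟨by omega⟩
  classical
  have hm1 : ∀ j, MeasurableSet {ω | X j ω = 1} :=
    fun j => (hmeas j) (measurableSet_singleton 1)
  have hm2 : ∀ j, MeasurableSet {ω | X j ω = -1} :=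
    fun j => (hmeas j) (measurableSet_singleton (-1))
  have hdisj : ∀ j, Disjoint {ω | X j ω = 1} {ω | X j ω = -1} := by
    intro j
    rw [Set.disjoint_left]
    intro ω h1 h2
    simp only [Set.mem_setOf_eq] at h1 h2
    rw [h1] at h2; norm_num at h2
  set A : Set Ω := ⋂ j : Fin n, ({ω | X j ω = 1} ∪ {ω | X j ω = -1}) with hAdef
  have hAc : P Aᶜ = 0 := by
    rw [hAdef, Set.compl_iInter]
    refine measure_iUnion_null fun j => ?_
    rw [prob_compl_eq_zero_iff ((hm1 j).union (hm2 j))]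
    rw [measure_union (hdisj j) (hm2 j), (hdist j).1, (hdist j).2, ENNReal.add_halves]
  set B : Set Ω := {ω | (Matrix.of fun i j : Fin n => X (j - i) ω).det = 0} with hBdef
  set E : Set Ω := {ω | ∀ j j' : Fin n, X j ω = X j' ω} with hEdef
  have hBA : B ∩ A = E ∩ A := by
    ext ω
    simp only [hBdef, hEdef, hAdef, Set.mem_inter_iff, Set.mem_setOf_eq, Set.mem_iInter,
      Set.mem_union]
    constructor
    · rintro ⟨h1, h2⟩
      exact ⟨(circ_det_zero_iff n hp hn (fun j => X j ω) h2).mp h1, h2⟩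
    · rintro ⟨h1, h2⟩
      exact ⟨(circ_det_zero_iff n hp hn (fun j => X j ω) h2).mpr h1, h2⟩
  have hPBE : P B = P E := by
    rw [← measure_inter_conull hAc, hBA, measure_inter_conull hAc]
  set I1 : Set Ω := ⋂ j : Fin n, {ω | X j ω = 1} with hI1def
  set I2 : Set Ω := ⋂ j : Fin n, {ω | X j ω = -1} with hI2def
  have hEA : E ∩ A = I1 ∪ I2 := by
    ext ω
    simp only [hEdef, hAdef, hI1def, hI2def, Set.mem_inter_iff, Set.mem_setOf_eq,
      Set.mem_iInter, Set.mem_union]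
    constructor
    · rintro ⟨h1, h2⟩
      rcases h2 0 with h | h
      · exact Or.inl fun j => (h1 j 0).trans h
      · exact Or.inr fun j => (h1 j 0).trans h
    · rintro (h | h)
      · exact ⟨fun j j' => (h j).trans (h j').symm, fun j => Or.inl (h j)⟩
      · exact ⟨fun j j' => (h j).trans (h j').symm, fun j => Or.inr (h j)⟩
  have hPI1 : P I1 = (1 / 2 : ℝ≥0∞) ^ n := by
    rw [hI1def, show (⋂ j : Fin n, {ω | X j ω = 1}) = ⋂ j, X j ⁻¹' ({1} : Set ℝ) from rfl,
      hindep.meas_iInter (fun j => ⟨{1}, measurableSet_singleton 1, rfl⟩)]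
    rw [Finset.prod_congr rfl fun j _ => (show P (X j ⁻¹' {1}) = 1 / 2 from (hdist j).1),
      Finset.prod_const, Finset.card_univ, Fintype.card_fin]
  have hPI2 : P I2 = (1 / 2 : ℝ≥0∞) ^ n := by
    rw [hI2def, show (⋂ j : Fin n, {ω | X j ω = -1}) = ⋂ j, X j ⁻¹' ({-1} : Set ℝ) from rfl,
      hindep.meas_iInter (fun j => ⟨{-1}, measurableSet_singleton (-1), rfl⟩)]
    rw [Finset.prod_congr rfl fun j _ => (show P (X j ⁻¹' {-1}) = 1 / 2 from (hdist j).2),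
      Finset.prod_const, Finset.card_univ, Fintype.card_fin]
  have hdisjI : Disjoint I1 I2 := by
    rw [Set.disjoint_left]
    intro ω h1 h2
    rw [hI1def, Set.mem_iInter] at h1
    rw [hI2def, Set.mem_iInter] at h2
    have h12 := (h1 0).symm.trans (h2 0)
    norm_num at h12
  have hhalf : (1 / 2 : ℝ≥0∞) ^ n + (1 / 2) ^ n = (1 / 2) ^ (n - 1) := by
    obtain ⟨m, hm⟩ : ∃ m, n = m + 1 := ⟨n - 1, by omega⟩
    subst hm
    simp only [Nat.add_sub_cancel, pow_succ]
    rw [← mul_add, ENNReal.add_halves, mul_one]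
  have hPE : P E = (1 / 2 : ℝ≥0∞) ^ (n - 1) := by
    rw [← measure_inter_conull hAc, hEA,
      measure_union hdisjI (MeasurableSet.iInter fun j => hm2 j), hPI1, hPI2, hhalf]
  refine ⟨?_, hPBE.trans (by rw [hEdef])⟩
  rw [hPBE, hPE]
  simp [ENNReal.toReal_pow, ENNReal.toReal_div]
end
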